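/- For the deletion-robust BinVal problem with budget k ≤ n and deletion parameter d < k, defined by F(x) = min over z ⊆ x with |z|_1 ≤ d of Σ_i 2^{n−i}(x_i − z_i) subject to |x|_1 ≤ k, the string 1^k 0^{n−k} is the unique optimal solution. -/

import Mathlib

/-- Number of 1-bits of a binary string. -/
def onesCount {n : ℕ} (x : Fin n → Bool) : ℕ :=
  (Finset.univ.filter fun i => x i = true).card

/-- The deletion-robust BinVal objective: the remaining value `Σ 2^(n-i)(x_i - z_i)`
after an adversary deletes up to `d` of the ones (`z ⊆ x`, `|z|₁ ≤ d`).
(Positions are 0-indexed, so the weight of position `i` is `2^(n-1-i)`.) -/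
noncomputable def drBinVal (n d : ℕ) (x : Fin n → Bool) : ℕ :=
  sInf {v : ℕ | ∃ z : Fin n → Bool,
    (∀ i, z i = true → x i = true) ∧ onesCount z ≤ d ∧
    v = ∑ i : Fin n, if x i = true ∧ z i = false then 2 ^ (n - 1 - (i : ℕ)) else 0}

lemma geom2 (m : ℕ) : ∑ e ∈ Finset.range m, 2 ^ e = 2 ^ m - 1 := by
  induction m with
  | zero => simp
  | succ m ih =>
    have h1 : 1 ≤ 2 ^ m := Nat.one_le_two_pow
    have h2 : 2 ^ (m + 1) = 2 ^ m * 2 := pow_succ 2 m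
    rw [Finset.sum_range_succ, ih]; omega

lemma card_filter_lt (N c : ℕ) (h : c ≤ N) :
    ((Finset.univ.filter fun i : Fin N => (i : ℕ) < c).card) = c := by
  have himg : (Finset.univ.filter fun i : Fin N => (i : ℕ) < c).image Fin.val
      = Finset.range c := by
    ext e
    simp only [Finset.mem_image, Finset.mem_filter, Finset.mem_univ, true_and,
      Finset.mem_range]
    constructor
    · rintro ⟨i, hi, rfl⟩; exact hi
    · intro he; exact ⟨⟨e, lt_of_lt_of_le he h⟩, he, rfl⟩
  rw [← Finset.card_image_of_injective
    (Finset.univ.filter fun i : Fin N => (i : ℕ) < c) Fin.val_injective, himg,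
    Finset.card_range]

lemma L1 : ∀ (c : ℕ) (T : Finset ℕ), T.card = c → 2 ^ c ≤ (∑ e ∈ T, 2 ^ e) + 1 := by
  intro c
  induction c using Nat.strong_induction_on with
  | _ c ih =>
    intro T hT
    rcases Nat.eq_zero_or_pos c with h0 | hpos
    · simp [h0]
    · have hne : T.Nonempty := by rw [← Finset.card_pos, hT]; exact hpos
      set M := T.max' hne with hM
      have hMmem : M ∈ T := T.max'_mem hne
      have hsub : T ⊆ Finset.range (M + 1) := fun e he =>
        Finset.mem_range.mpr (Nat.lt_succ_of_le (T.le_max' e he))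
      have hcard : c ≤ M + 1 := by
        have := Finset.card_le_card hsub
        rwa [hT, Finset.card_range] at this
      have herase : (T.erase M).card = c - 1 := by
        rw [Finset.card_erase_of_mem hMmem, hT]
      have ih' := ih (c - 1) (by omega) (T.erase M) herase
      have hsum : ∑ e ∈ T, 2 ^ e = 2 ^ M + ∑ e ∈ T.erase M, 2 ^ e :=
        (Finset.add_sum_erase T _ hMmem).symm
      have h2 : 2 ^ (c - 1) ≤ 2 ^ M := Nat.pow_le_pow_right (by norm_num) (by omega)
      have hc : 2 ^ c = 2 ^ (c - 1) * 2 := by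
        rw [← pow_succ]; congr 1; omega
      omega

lemma le_apply' {m n : ℕ} {f : Fin m → Fin n} (hf : StrictMono f) :
    ∀ j : Fin m, (j : ℕ) ≤ (f j : ℕ) := by
  have key : ∀ v, ∀ j : Fin m, (j : ℕ) = v → v ≤ (f j : ℕ) := by
    intro v
    induction v using Nat.strong_induction_on with
    | _ v ih =>
      intro j hj
      rcases Nat.eq_zero_or_pos v with rfl | hv
      · exact Nat.zero_le _
      · have hjm : (j : ℕ) < m := j.isLt
        have hvm : v - 1 < m := by omega
        set j' : Fin m := ⟨v - 1, hvm⟩ with hj'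
        have h1 : j' < j := by rw [Fin.lt_def]; simp [hj']; omega
        have h2 : (f j' : ℕ) < (f j : ℕ) := hf h1
        have h3 := ih (v - 1) (by omega) j' rfl
        omega
  intro j; exact key _ j rfl

lemma sumIco (n d k : ℕ) (hd : d ≤ k) (hk : k ≤ n) :
    ∑ t ∈ Finset.Ico d k, 2 ^ (n - 1 - t) = 2 ^ (n - k) * (2 ^ (k - d) - 1) := by
  rw [← geom2, Finset.mul_sum]
  refine Finset.sum_nbij' (fun t => k - 1 - t) (fun s => k - 1 - s) ?_ ?_ ?_ ?_ ?_
  · intro a ha; simp only [Finset.mem_Ico] at ha; simp only [Finset.mem_range]; omega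
  · intro b hb; simp only [Finset.mem_range] at hb; simp only [Finset.mem_Ico]; omega
  · intro a ha; simp only [Finset.mem_Ico] at ha; omega
  · intro b hb; simp only [Finset.mem_range] at hb; omega
  · intro a ha
    simp only [Finset.mem_Ico] at ha
    rw [← pow_add]
    congr 1
    omega

lemma stepA (n d k : ℕ) (hd : d < k) (hk : k ≤ n) :
    2 ^ (n - k) * (2 ^ (k - d) - 1) ≤
      drBinVal n d (fun i : Fin n => decide ((i : ℕ) < k)) := by
  set xs : Fin n → Bool := fun i => decide ((i : ℕ) < k) with hxs
  clear_value xs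
  have hne : Set.Nonempty {v : ℕ | ∃ z : Fin n → Bool,
      (∀ i, z i = true → xs i = true) ∧ onesCount z ≤ d ∧
      v = ∑ i : Fin n, if xs i = true ∧ z i = false then 2 ^ (n - 1 - (i : ℕ)) else 0} :=
    ⟨_, ⟨fun _ => false, fun i h => absurd h (by simp), by simp [onesCount], rfl⟩⟩
  have hmem := Nat.sInf_mem hne
  obtain ⟨z, hz1, hz2, hval⟩ := hmem
  have hdr : drBinVal n d xs
      = ∑ i : Fin n, if xs i = true ∧ z i = false then 2 ^ (n - 1 - (i : ℕ)) else 0 := hval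
  clear hval
  rw [hdr, ← Finset.sum_filter]
  set A := Finset.univ.filter fun i : Fin n => xs i = true ∧ z i = false with hA
  clear_value A
  have hAk : ∀ i ∈ A, (i : ℕ) < k := by
    intro i hi
    simp only [hA, Finset.mem_filter, Finset.mem_univ, true_and, hxs,
      decide_eq_true_eq] at hi
    exact hi.1
  have hcardA : k - d ≤ A.card := by
    have hZsub : (Finset.univ.filter fun i : Fin n => z i = true)
        ⊆ Finset.univ.filter fun i : Fin n => xs i = true := by
      intro i hi
      simp only [Finset.mem_filter, Finset.mem_univ, true_and] at hi ⊢
      exact hz1 i hi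
    have hAeq : A = (Finset.univ.filter fun i : Fin n => xs i = true)
        \ (Finset.univ.filter fun i : Fin n => z i = true) := by
      ext i
      simp only [hA, Finset.mem_filter, Finset.mem_univ, true_and, Finset.mem_sdiff,
        Bool.not_eq_true]
    have hcS : (Finset.univ.filter fun i : Fin n => xs i = true).card = k := by
      have : (Finset.univ.filter fun i : Fin n => xs i = true)
          = Finset.univ.filter fun i : Fin n => (i : ℕ) < k := by
        ext i; simp [hxs]
      rw [this, card_filter_lt n k hk]
    have hcZ : (Finset.univ.filter fun i : Fin n => z i = true).card ≤ d := hz2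
    rw [hAeq, Finset.card_sdiff_of_subset hZsub, hcS]
    omega
  have hinj : ∀ a ∈ A, ∀ b ∈ A, k - 1 - (a : ℕ) = k - 1 - (b : ℕ) → a = b := by
    intro a ha b hb hab
    have := hAk a ha; have := hAk b hb
    exact Fin.ext (by omega)
  have himg : ∑ i ∈ A, 2 ^ (k - 1 - (i : ℕ))
      = ∑ e ∈ A.image (fun i : Fin n => k - 1 - (i : ℕ)), 2 ^ e :=
    (Finset.sum_image hinj).symm
  have hcimg : (A.image (fun i : Fin n => k - 1 - (i : ℕ))).card = A.card :=
    Finset.card_image_of_injOn hinj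
  have hL := L1 _ _ hcimg
  have hpow : 2 ^ (k - d) ≤ 2 ^ A.card := Nat.pow_le_pow_right (by norm_num) hcardA
  have hmain : 2 ^ (k - d) - 1 ≤ ∑ i ∈ A, 2 ^ (k - 1 - (i : ℕ)) := by
    rw [himg]; omega
  calc 2 ^ (n - k) * (2 ^ (k - d) - 1)
      ≤ 2 ^ (n - k) * ∑ i ∈ A, 2 ^ (k - 1 - (i : ℕ)) := Nat.mul_le_mul_left _ hmain
    _ = ∑ i ∈ A, 2 ^ (n - 1 - (i : ℕ)) := by
        rw [Finset.mul_sum]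
        refine Finset.sum_congr rfl fun i hi => ?_
        have := hAk i hi
        rw [← pow_add]
        congr 1
        omega

lemma stepB (n d k : ℕ) (hd : d < k) (hk : k ≤ n) (x : Fin n → Bool)
    (hx : onesCount x ≤ k) (hnex : x ≠ fun i : Fin n => decide ((i : ℕ) < k)) :
    drBinVal n d x < 2 ^ (n - k) * (2 ^ (k - d) - 1) := by
  have hVpos : 0 < 2 ^ (n - k) * (2 ^ (k - d) - 1) := by
    have h1 : 0 < 2 ^ (n - k) := Nat.pow_pos (by norm_num)
    have h2 : 2 ≤ 2 ^ (k - d) := by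
      calc 2 = 2 ^ 1 := (pow_one 2).symm
        _ ≤ 2 ^ (k - d) := Nat.pow_le_pow_right (by norm_num) (by omega)
    exact Nat.mul_pos h1 (by omega)
  set S := Finset.univ.filter fun i : Fin n => x i = true with hS
  have hxcard : S.card ≤ k := hx
  by_cases hcase : S.card ≤ d
  · -- delete everything
    have h0 : (0 : ℕ) ∈ {v : ℕ | ∃ z : Fin n → Bool,
        (∀ i, z i = true → x i = true) ∧ onesCount z ≤ d ∧
        v = ∑ i : Fin n, if x i = true ∧ z i = false then 2 ^ (n - 1 - (i : ℕ)) else 0} := by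
      refine ⟨x, fun i h => h, hcase, ?_⟩
      symm
      apply Finset.sum_eq_zero
      intro i _
      rcases h : x i with _ | _ <;> simp [h]
    have hle : drBinVal n d x ≤ 0 := Nat.sInf_le h0
    omega
  · push_neg at hcase
    have hdm : d < S.card := hcase
    set e := S.orderEmbOfFin rfl with he
    have hmono : StrictMono e := (S.orderEmbOfFin rfl).strictMono
    have hinje : Function.Injective e := hmono.injective
    have hje : ∀ j : Fin S.card, (j : ℕ) ≤ (e j : ℕ) := le_apply' hmono
    have hememS : ∀ j : Fin S.card, x (e j) = true := by
      intro j
      have h := Finset.orderEmbOfFin_mem S rfl j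
      exact (Finset.mem_filter.mp h).2
    set z : Fin n → Bool :=
      fun i => decide (∃ j : Fin S.card, (j : ℕ) < d ∧ e j = i) with hz
    have hziff : ∀ i, z i = true ↔ ∃ j : Fin S.card, (j : ℕ) < d ∧ e j = i := by
      intro i; simp [hz]
    have hz1 : ∀ i, z i = true → x i = true := by
      intro i h
      obtain ⟨j, _, hji⟩ := (hziff i).mp h
      rw [← hji]; exact hememS j
    have hz2 : onesCount z ≤ d := by
      have hzf : (Finset.univ.filter fun i => z i = true)
          = (Finset.univ.filter fun j : Fin S.card => (j : ℕ) < d).image e := by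
        ext i
        simp only [Finset.mem_filter, Finset.mem_univ, true_and, Finset.mem_image]
        rw [hziff i]
      show (Finset.univ.filter fun i => z i = true).card ≤ d
      rw [hzf, Finset.card_image_of_injective _ hinje,
        card_filter_lt S.card d (le_of_lt hdm)]
    have hmemv : (∑ i : Fin n, if x i = true ∧ z i = false
          then 2 ^ (n - 1 - (i : ℕ)) else 0) ∈ {v : ℕ | ∃ z : Fin n → Bool,
        (∀ i, z i = true → x i = true) ∧ onesCount z ≤ d ∧
        v = ∑ i : Fin n, if x i = true ∧ z i = false then 2 ^ (n - 1 - (i : ℕ)) else 0} :=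
      ⟨z, hz1, hz2, rfl⟩
    have hle : drBinVal n d x ≤ ∑ i : Fin n, if x i = true ∧ z i = false
        then 2 ^ (n - 1 - (i : ℕ)) else 0 := Nat.sInf_le hmemv
    refine lt_of_le_of_lt hle ?_
    clear hle hmemv
    rw [← Finset.sum_filter]
    set Fm := Finset.univ.filter fun j : Fin S.card => ¬ (j : ℕ) < d with hFm
    have hB : (Finset.univ.filter fun i : Fin n => x i = true ∧ z i = false)
        = Fm.image e := by
      ext i
      simp only [Finset.mem_filter, Finset.mem_univ, true_and, Finset.mem_image, hFm]
      constructor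
      · rintro ⟨hxi, hzi⟩
        have hiS : i ∈ S := by rw [hS]; exact Finset.mem_filter.mpr ⟨Finset.mem_univ _, hxi⟩
        have hiR : i ∈ Set.range e := by
          rw [he, Finset.range_orderEmbOfFin]; exact hiS
        obtain ⟨j, hj⟩ := hiR
        refine ⟨j, ?_, hj⟩
        intro hjd
        have : z i = true := (hziff i).mpr ⟨j, hjd, hj⟩
        rw [this] at hzi; cases hzi
      · rintro ⟨j, hjd, rfl⟩
        refine ⟨hememS j, ?_⟩
        rcases hzb : z (e j) with _ | _
        · rfl
        · obtain ⟨j', hj', hj'e⟩ := (hziff _).mp hzb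
          have hj'j : j' = j := hinje hj'e
          rw [hj'j] at hj'
          exact absurd hj' hjd
    rw [hB, Finset.sum_image fun a _ b _ h => hinje h]
    have hterm : ∀ j ∈ Fm, 2 ^ (n - 1 - (e j : ℕ)) ≤ 2 ^ (n - 1 - (j : ℕ)) := by
      intro j _
      exact Nat.pow_le_pow_right (by norm_num) (by have := hje j; omega)
    have hVm_eq : ∑ j ∈ Fm, 2 ^ (n - 1 - (j : ℕ))
        = ∑ t ∈ Finset.Ico d S.card, 2 ^ (n - 1 - t) := by
      have himgF : Fm.image Fin.val = Finset.Ico d S.card := by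
        ext t
        simp only [Finset.mem_image, Finset.mem_filter, Finset.mem_univ, true_and,
          Finset.mem_Ico, hFm]
        constructor
        · rintro ⟨j, hj, rfl⟩; exact ⟨by omega, j.isLt⟩
        · rintro ⟨h1, h2⟩; exact ⟨⟨t, h2⟩, by show ¬ t < d; omega, rfl⟩
      rw [← himgF, Finset.sum_image fun a _ b _ h => Fin.val_injective h]
    have hVstar : ∑ t ∈ Finset.Ico d k, 2 ^ (n - 1 - t)
        = 2 ^ (n - k) * (2 ^ (k - d) - 1) := sumIco n d k hd.le hk
    by_cases hAll : ∀ j ∈ Fm, (e j : ℕ) = (j : ℕ)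
    · rcases Nat.lt_or_ge S.card k with hmk | hmk
      · calc ∑ j ∈ Fm, 2 ^ (n - 1 - (e j : ℕ))
            ≤ ∑ j ∈ Fm, 2 ^ (n - 1 - (j : ℕ)) := Finset.sum_le_sum hterm
          _ = ∑ t ∈ Finset.Ico d S.card, 2 ^ (n - 1 - t) := hVm_eq
          _ < ∑ t ∈ Finset.Ico d k, 2 ^ (n - 1 - t) := by
              refine Finset.sum_lt_sum_of_subset
                (Finset.Ico_subset_Ico le_rfl hxcard)
                (i := S.card) (Finset.mem_Ico.mpr ⟨hdm.le, hmk⟩)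
                (by simp) (Nat.pow_pos (by norm_num))
                (fun j _ _ => Nat.zero_le _)
          _ = 2 ^ (n - k) * (2 ^ (k - d) - 1) := hVstar
      · exfalso
        apply hnex
        have hmkeq : S.card = k := le_antisymm hxcard hmk
        have hSsub : (Finset.univ.filter fun i : Fin n => (i : ℕ) < k) ⊆ S := by
          intro i hi
          have hik : (i : ℕ) < k := (Finset.mem_filter.mp hi).2
          by_cases hid : (i : ℕ) < d
          · have hjdF : (⟨d, hdm⟩ : Fin S.card) ∈ Fm := by
              rw [hFm]
              exact Finset.mem_filter.mpr ⟨Finset.mem_univ _, by show ¬ d < d; omega⟩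
            have hed : (e ⟨d, hdm⟩ : ℕ) = d := hAll _ hjdF
            have hAsubD : (Finset.univ.filter fun j : Fin S.card => (j : ℕ) < d).image e
                ⊆ Finset.univ.filter fun i : Fin n => (i : ℕ) < d := by
              intro a ha
              obtain ⟨j, hj, rfl⟩ := Finset.mem_image.mp ha
              have hjd : (j : ℕ) < d := (Finset.mem_filter.mp hj).2
              have hlt : e j < e ⟨d, hdm⟩ := hmono (by rw [Fin.lt_def]; exact hjd)
              have hlt' : (e j : ℕ) < (e ⟨d, hdm⟩ : ℕ) := hlt
              refine Finset.mem_filter.mpr ⟨Finset.mem_univ _, ?_⟩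
              omega
            have hAD : (Finset.univ.filter fun j : Fin S.card => (j : ℕ) < d).image e
                = Finset.univ.filter fun i : Fin n => (i : ℕ) < d := by
              apply Finset.eq_of_subset_of_card_le hAsubD
              rw [Finset.card_image_of_injective _ hinje,
                card_filter_lt S.card d hdm.le, card_filter_lt n d (by omega)]
            have hiD : i ∈ Finset.univ.filter fun i : Fin n => (i : ℕ) < d :=
              Finset.mem_filter.mpr ⟨Finset.mem_univ _, hid⟩
            rw [← hAD] at hiD
            obtain ⟨j, _, hji⟩ := Finset.mem_image.mp hiD
            rw [← hji]
            exact Finset.orderEmbOfFin_mem S rfl j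
          · have hj : (i : ℕ) < S.card := by omega
            have hjFm : (⟨(i : ℕ), hj⟩ : Fin S.card) ∈ Fm := by
              rw [hFm]
              exact Finset.mem_filter.mpr ⟨Finset.mem_univ _, hid⟩
            have heq : e ⟨(i : ℕ), hj⟩ = i := Fin.ext (hAll _ hjFm)
            rw [← heq]
            exact Finset.orderEmbOfFin_mem S rfl _
        have hSeq : (Finset.univ.filter fun i : Fin n => (i : ℕ) < k) = S :=
          Finset.eq_of_subset_of_card_le hSsub (by rw [card_filter_lt n k hk, hmkeq])
        funext i
        by_cases hik : (i : ℕ) < k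
        · have hiS : i ∈ S := hSeq ▸ Finset.mem_filter.mpr ⟨Finset.mem_univ _, hik⟩
          have hxi : x i = true := (Finset.mem_filter.mp hiS).2
          simp [hxi, hik]
        · have hxi : x i ≠ true := by
            intro h
            have hiS : i ∈ S := Finset.mem_filter.mpr ⟨Finset.mem_univ _, h⟩
            rw [← hSeq] at hiS
            exact hik (Finset.mem_filter.mp hiS).2
          rcases hb : x i with _ | _
          · simp [hik]
          · exact absurd hb hxi
    · push_neg at hAll
      obtain ⟨j0, hj0F, hj0⟩ := hAll
      have hstrict : 2 ^ (n - 1 - (e j0 : ℕ)) < 2 ^ (n - 1 - (j0 : ℕ)) := by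
        have h1 := hje j0
        have h2 := (e j0).isLt
        have h3 : (j0 : ℕ) < (e j0 : ℕ) := by omega
        exact Nat.pow_lt_pow_right (by norm_num) (by omega)
      calc ∑ j ∈ Fm, 2 ^ (n - 1 - (e j : ℕ))
          < ∑ j ∈ Fm, 2 ^ (n - 1 - (j : ℕ)) :=
            Finset.sum_lt_sum hterm ⟨j0, hj0F, hstrict⟩
        _ = ∑ t ∈ Finset.Ico d S.card, 2 ^ (n - 1 - t) := hVm_eq
        _ ≤ ∑ t ∈ Finset.Ico d k, 2 ^ (n - 1 - t) :=
            Finset.sum_le_sum_of_subset (Finset.Ico_subset_Ico le_rfl hxcard)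
        _ = 2 ^ (n - k) * (2 ^ (k - d) - 1) := hVstar

/-- For deletion-robust BinVal with budget `k ≤ n` and `d < k`, the string
`1^k 0^(n-k)` is the unique optimal solution. -/
theorem deletion_robust_binval_unique_optimum (n d k : ℕ) (hd : d < k) (hk : k ≤ n) :
    ∀ x : Fin n → Bool, onesCount x ≤ k → x ≠ (fun i : Fin n => decide ((i : ℕ) < k)) →
      drBinVal n d x < drBinVal n d (fun i => decide ((i : ℕ) < k)) := by
  intro x hx hne
  exact lt_of_lt_of_le (stepB n d k hd hk x hx hne) (stepA n d k hd hk)
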